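/- Let G ≤ L₁ × ⋯ × Lₙ where each Lᵢ has the property that it is abelian or has trivial center (e.g., each Lᵢ a limit group). Let pᵢ denote projection to Lᵢ and I = {i : pᵢ(G) abelian}. Then the center Z(G) equals the kernel of the natural map from G to ∏_{i∉I} Lᵢ, i.e., Z(G) = G ∩ ∏_{i∈I} Lᵢ. -/
import Mathlib


/-- Let `G ≤ L₁ × ⋯ × Lₙ`, where each projection `pᵢ(G)` is abelian or
centerless. Then an element of `G` is central iff its coordinates at all the
indices with nonabelian projection are trivial, i.e. `Z(G) = G ∩ ∏_{i∈I} Lᵢ`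
where `I` is the set of indices with abelian projection. -/
theorem stmt_11 {n : ℕ} (L : Fin n → Type*) [∀ i, Group (L i)]
    (G : Subgroup (∀ i, L i))
    (hcc : ∀ i, (∀ x ∈ Subgroup.map (Pi.evalMonoidHom L i) G,
                  ∀ y ∈ Subgroup.map (Pi.evalMonoidHom L i) G, x * y = y * x)
            ∨ (∀ x ∈ Subgroup.map (Pi.evalMonoidHom L i) G,
                (∀ y ∈ Subgroup.map (Pi.evalMonoidHom L i) G, x * y = y * x) → x = 1)) :
    ∀ g : G, g ∈ Subgroup.center G ↔
      ∀ i, (¬ ∀ x ∈ Subgroup.map (Pi.evalMonoidHom L i) G,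
              ∀ y ∈ Subgroup.map (Pi.evalMonoidHom L i) G, x * y = y * x) →
        (g : ∀ i, L i) i = 1 := by
  intro g
  rw [Subgroup.mem_center_iff]
  constructor
  · intro hg i hi
    rcases hcc i with h | h
    · exact absurd h hi
    · apply h _ ⟨(g : ∀ i, L i), g.2, rfl⟩
      rintro y ⟨h', hh', rfl⟩
      have h1 := hg ⟨h', hh'⟩
      have h2 := congrFun (Subtype.ext_iff.mp h1) i
      simpa using h2.symm
  · intro hg h
    apply Subtype.ext
    funext i
    show (h : ∀ i, L i) i * (g : ∀ i, L i) i = (g : ∀ i, L i) i * (h : ∀ i, L i) i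
    by_cases hab : (∀ x ∈ Subgroup.map (Pi.evalMonoidHom L i) G,
                  ∀ y ∈ Subgroup.map (Pi.evalMonoidHom L i) G, x * y = y * x)
    · exact hab _ ⟨(h : ∀ i, L i), h.2, rfl⟩ _ ⟨(g : ∀ i, L i), g.2, rfl⟩
    · rw [hg i hab, mul_one, one_mul]
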